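/- For all real a, b, t with 1 < a ≤ b < t, one has t·J₅(a,b;t) > log((t + √(t²−b²))/b), where J₅(a,b;t) = ∫_{b}^{t} √((z+a)/((t²−z²)(z²−1)(z−b))) dz. In particular t·J₅(a,b;t) tends to +∞ as t tends to +∞. -/

import Mathlib

open MeasureTheory intervalIntegral Real Filter Topology

section aux
open Set

lemma int_shift_r (c u v : ℝ) :
    IntervalIntegrable (fun z => (z - c) ^ (-(1/2) : ℝ)) volume u v := by
  have := (intervalIntegrable_rpow' (a := u - c) (b := v - c)
    (r := -(1/2)) (by norm_num)).comp_sub_right c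
  simpa using this

lemma int_shift_l (c u v : ℝ) :
    IntervalIntegrable (fun z => (c - z) ^ (-(1/2) : ℝ)) volume u v := by
  have := (intervalIntegrable_rpow' (a := c - u) (b := c - v)
    (r := -(1/2)) (by norm_num)).comp_sub_left c
  simpa using this

lemma sqrt_div_eq (K u : ℝ) (hu : 0 ≤ u) :
    Real.sqrt (K / u) = Real.sqrt K * u ^ (-(1/2) : ℝ) := by
  rw [div_eq_mul_inv, Real.sqrt_mul' _ (inv_nonneg.mpr hu), Real.sqrt_inv,
    show (Real.sqrt u)⁻¹ = u ^ (-(1/2):ℝ) by rw [Real.sqrt_eq_rpow, ← Real.rpow_neg hu]]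

lemma g_meas (a b t : ℝ) : Measurable
    (fun z : ℝ => Real.sqrt ((z + a) / ((t ^ 2 - z ^ 2) * (z ^ 2 - 1) * (z - b)))) := by
  apply Real.continuous_sqrt.measurable.comp
  exact (measurable_id.add_const a).div
    ((((measurable_const.sub ((measurable_id.pow_const 2)))).mul
      ((measurable_id.pow_const 2).sub measurable_const)).mul (measurable_id.sub_const b))

lemma norm_sqrt_le_of_le {u C w : ℝ} (hw : 0 ≤ w) (h : u ≤ (C / w)) :
    ‖Real.sqrt u‖ ≤ ‖Real.sqrt C * w ^ (-(1/2) : ℝ)‖ := by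
  rw [Real.norm_eq_abs, abs_of_nonneg (Real.sqrt_nonneg _)]
  refine le_trans ?_ (le_abs_self _)
  rw [← sqrt_div_eq C w hw]
  exact Real.sqrt_le_sqrt h

set_option maxHeartbeats 1000000 in
lemma g_int (a b t : ℝ) (h1 : 1 < a) (hab : a ≤ b) (hbt : b < t) :
    IntervalIntegrable
      (fun z => Real.sqrt ((z + a) / ((t ^ 2 - z ^ 2) * (z ^ 2 - 1) * (z - b))))
      volume b t := by
  obtain ⟨m, hm⟩ : ∃ m : ℝ, m = (b + t) / 2 := ⟨_, rfl⟩
  have hb1 : 1 < b := lt_of_lt_of_le h1 hab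
  have hbm : b < m := by rw [hm]; linarith
  have hmt : m < t := by rw [hm]; linarith
  have h1m : 1 < m := by linarith
  apply IntervalIntegrable.trans (b := m)
  · -- on [b, m], bound by C * (z-b)^(-1/2)
    apply ((int_shift_r b b m).const_mul
        (Real.sqrt ((t + a) / ((t ^ 2 - m ^ 2) * (b ^ 2 - 1))))).mono_fun
      (g_meas a b t).aestronglyMeasurable
    rw [Filter.EventuallyLE, ae_restrict_iff' measurableSet_uIoc]
    apply Filter.Eventually.of_forall
    intro x hx
    rw [Set.uIoc_of_le hbm.le] at hx
    obtain ⟨hx1, hx2⟩ := hx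
    have hxb : 0 < x - b := by linarith
    have hD : 0 < (t ^ 2 - x ^ 2) * (x ^ 2 - 1) * (x - b) := by
      have hxt : x < t := by linarith
      have h2 : 0 < t ^ 2 - x ^ 2 := by nlinarith
      have h3 : 0 < x ^ 2 - 1 := by nlinarith
      positivity
    apply norm_sqrt_le_of_le hxb.le
    rw [div_div, div_le_div_iff₀ hD (by
      have h2 : 0 < t ^ 2 - m ^ 2 := by nlinarith
      have h3 : 0 < b ^ 2 - 1 := by nlinarith
      positivity)]
    have e1 : x + a ≤ t + a := by linarith
    have e2 : t ^ 2 - m ^ 2 ≤ t ^ 2 - x ^ 2 := by nlinarith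
    have e3 : b ^ 2 - 1 ≤ x ^ 2 - 1 := by nlinarith
    have h3 : 0 < b ^ 2 - 1 := by nlinarith
    have h2 : 0 < t ^ 2 - m ^ 2 := by nlinarith
    have e5 : (t ^ 2 - m ^ 2) * (b ^ 2 - 1) * (x - b)
        ≤ (t ^ 2 - x ^ 2) * (x ^ 2 - 1) * (x - b) := by
      refine mul_le_mul_of_nonneg_right ?_ hxb.le
      exact mul_le_mul e2 e3 h3.le (by nlinarith)
    exact mul_le_mul e1 e5 (mul_pos (mul_pos h2 h3) hxb).le (by linarith)
  · -- on [m, t], bound by C2 * (t-z)^(-1/2)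
    apply ((int_shift_l t m t).const_mul
        (Real.sqrt ((t + a) / ((t + m) * (m ^ 2 - 1) * (m - b))))).mono_fun
      (g_meas a b t).aestronglyMeasurable
    rw [Filter.EventuallyLE, ae_restrict_iff' measurableSet_uIoc]
    apply Filter.Eventually.of_forall
    intro x hx
    rw [Set.uIoc_of_le hmt.le] at hx
    obtain ⟨hx1, hx2⟩ := hx
    have hxt0 : 0 ≤ t - x := by linarith
    apply norm_sqrt_le_of_le hxt0
    rcases eq_or_lt_of_le hx2 with h | h
    · subst h
      simp
    · have hxt : 0 < t - x := by linarith
      have hD : 0 < (t ^ 2 - x ^ 2) * (x ^ 2 - 1) * (x - b) := by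
        have h2 : 0 < t ^ 2 - x ^ 2 :=
          mul_pos (by linarith : (0:ℝ) < t - x) (by linarith : (0:ℝ) < t + x) |>.trans_le
            (by nlinarith)
        have h3 : 0 < x ^ 2 - 1 := by nlinarith [sq_nonneg (x - 1)]
        have h4 : 0 < x - b := by linarith
        positivity
      have h2m : 0 < m ^ 2 - 1 := by nlinarith [sq_nonneg (m - 1)]
      have h4m : 0 < m - b := by linarith
      rw [div_div, div_le_div_iff₀ hD
        (mul_pos (mul_pos (mul_pos (by linarith : (0:ℝ) < t + m) h2m) h4m) hxt)]
      have hrw : (t + a) * ((t ^ 2 - x ^ 2) * (x ^ 2 - 1) * (x - b))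
          = ((t + a) * ((t + x) * (x ^ 2 - 1) * (x - b))) * (t - x) := by ring
      have hrw2 : (x + a) * ((t + m) * (m ^ 2 - 1) * (m - b) * (t - x))
          = ((x + a) * ((t + m) * (m ^ 2 - 1) * (m - b))) * (t - x) := by ring
      rw [hrw, hrw2]
      refine mul_le_mul_of_nonneg_right ?_ hxt.le
      have e1 : x + a ≤ t + a := by linarith
      have e2 : t + m ≤ t + x := by linarith
      have e3 : m ^ 2 - 1 ≤ x ^ 2 - 1 := by nlinarith [sq_nonneg (x - m)]
      have e4 : m - b ≤ x - b := by linarith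
      have h3 : 0 < m ^ 2 - 1 := by nlinarith [sq_nonneg (m - 1)]
      have hx21 : 0 < x ^ 2 - 1 := by nlinarith [sq_nonneg (x - 1)]
      have e6 : (t + m) * (m ^ 2 - 1) * (m - b) ≤ (t + x) * (x ^ 2 - 1) * (x - b) :=
        mul_le_mul (mul_le_mul e2 e3 h3.le (by linarith)) e4 (by linarith)
          (mul_pos (by linarith : (0:ℝ) < t + x) hx21).le
      exact mul_le_mul e1 e6
        (mul_pos (mul_pos (by linarith : (0:ℝ) < t + m) h3) (by linarith : (0:ℝ) < m - b)).le
        (by linarith)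



lemma f_int (b t : ℝ) (hb : 1 < b) (hbt : b < t) :
    IntervalIntegrable (fun z => (Real.sqrt (z ^ 2 - b ^ 2))⁻¹) volume b t := by
  apply ((int_shift_r b b t).const_mul (Real.sqrt ((2 * b)⁻¹))).mono_fun
    ((Real.continuous_sqrt.measurable.comp
      ((measurable_id.pow_const 2).sub_const (b ^ 2))).inv.aestronglyMeasurable)
  rw [Filter.EventuallyLE, ae_restrict_iff' measurableSet_uIoc]
  apply Filter.Eventually.of_forall
  intro x hx
  rw [Set.uIoc_of_le hbt.le] at hx
  obtain ⟨hx1, hx2⟩ := hx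
  have hxb : 0 < x - b := by linarith
  simp only [Pi.inv_apply, Function.comp_apply, id_eq]
  rw [← Real.sqrt_inv]
  apply norm_sqrt_le_of_le hxb.le
  rw [div_eq_mul_inv, ← mul_inv]
  apply inv_anti₀ (by positivity)
  nlinarith [sq_nonneg (x - b)]

lemma ftc (b t : ℝ) (hb : 1 < b) (hbt : b < t) :
    ∫ z in b..t, (Real.sqrt (z ^ 2 - b ^ 2))⁻¹
      = Real.log ((t + Real.sqrt (t ^ 2 - b ^ 2)) / b) := by
  have hb0 : 0 < b := by linarith
  have hF : ∀ x ∈ Set.Ioo b t,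
      HasDerivAt (fun z => Real.log (z + Real.sqrt (z ^ 2 - b ^ 2)))
        ((Real.sqrt (x ^ 2 - b ^ 2))⁻¹) x := by
    intro x hx
    obtain ⟨hx1, hx2⟩ := hx
    have hY : 0 < x ^ 2 - b ^ 2 := by nlinarith
    have hs : 0 < Real.sqrt (x ^ 2 - b ^ 2) := Real.sqrt_pos.mpr hY
    have h1 : HasDerivAt (fun z : ℝ => z ^ 2 - b ^ 2) (2 * x) x := by
      simpa using (hasDerivAt_pow 2 x).sub_const (b ^ 2)
    have h2 := h1.sqrt hY.ne'
    have h3 : HasDerivAt (fun z : ℝ => z + Real.sqrt (z ^ 2 - b ^ 2))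
        (1 + 2 * x / (2 * Real.sqrt (x ^ 2 - b ^ 2))) x := (hasDerivAt_id x).add h2
    have hpos : 0 < x + Real.sqrt (x ^ 2 - b ^ 2) := by
      have := Real.sqrt_nonneg (x ^ 2 - b ^ 2); linarith
    have h4 := h3.log hpos.ne'
    convert h4 using 1
    have hss : Real.sqrt (x ^ 2 - b ^ 2) * Real.sqrt (x ^ 2 - b ^ 2) = x ^ 2 - b ^ 2 :=
      Real.mul_self_sqrt hY.le
    field_simp
    nlinarith [hss]
  have hc : ContinuousOn (fun z : ℝ => Real.log (z + Real.sqrt (z ^ 2 - b ^ 2)))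
      (Set.Icc b t) := by
    apply ContinuousOn.log
    · exact (continuous_id.add (Real.continuous_sqrt.comp (by continuity))).continuousOn
    · intro x hx
      have h0 := Real.sqrt_nonneg (x ^ 2 - b ^ 2)
      have := hx.1
      exact ne_of_gt (by linarith)
  rw [integral_eq_sub_of_hasDerivAt_of_le hbt.le hc hF (f_int b t hb hbt)]
  have h0 : Real.sqrt (b ^ 2 - b ^ 2) = 0 := by simp
  have ht : 0 < t + Real.sqrt (t ^ 2 - b ^ 2) := by
    have := Real.sqrt_nonneg (t ^ 2 - b ^ 2); linarith
  rw [h0, add_zero, Real.log_div ht.ne' hb0.ne']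

lemma ptwise (a b t x : ℝ) (h1 : 1 < a) (hab : a ≤ b) (hbt : b < t)
    (hx : x ∈ Set.Ioo b t) :
    (Real.sqrt (x ^ 2 - b ^ 2))⁻¹
      < t * Real.sqrt ((x + a) / ((t ^ 2 - x ^ 2) * (x ^ 2 - 1) * (x - b))) := by
  obtain ⟨hx1, hx2⟩ := hx
  have hb1 : 1 < b := lt_of_lt_of_le h1 hab
  have ht0 : 0 < t := by linarith
  have ha0 : 0 < a := by linarith
  have hb0 : 0 < b := by linarith
  have hx0 : 0 < x := by linarith
  have hxb : 0 < x - b := by linarith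
  have hY : 0 < x ^ 2 - b ^ 2 := by nlinarith
  have h2 : 0 < t ^ 2 - x ^ 2 := by nlinarith
  have h3 : 0 < x ^ 2 - 1 := by nlinarith
  have hD : 0 < (t ^ 2 - x ^ 2) * (x ^ 2 - 1) * (x - b) := by positivity
  rw [← Real.sqrt_inv,
    show t * Real.sqrt ((x + a) / ((t ^ 2 - x ^ 2) * (x ^ 2 - 1) * (x - b)))
      = Real.sqrt (t ^ 2 * ((x + a) / ((t ^ 2 - x ^ 2) * (x ^ 2 - 1) * (x - b)))) by
        rw [Real.sqrt_mul (sq_nonneg t), Real.sqrt_sq ht0.le]]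
  apply Real.sqrt_lt_sqrt (inv_nonneg.mpr hY.le)
  rw [inv_eq_one_div, mul_div_assoc', div_lt_div_iff₀ hY hD]
  have key : (t ^ 2 - x ^ 2) * (x ^ 2 - 1) < t ^ 2 * ((x + a) * (x + b)) := by
    nlinarith [mul_pos (mul_pos ht0 ht0) (mul_pos ha0 hb0),
      mul_pos (mul_pos ht0 ht0) (mul_pos (add_pos ha0 hb0) hx0),
      mul_nonneg (sq_nonneg x) h3.le]
  nlinarith [mul_lt_mul_of_pos_right key hxb]

lemma main_ineq (a b t : ℝ) (h1 : 1 < a) (hab : a ≤ b) (hbt : b < t) :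
    Real.log ((t + Real.sqrt (t ^ 2 - b ^ 2)) / b)
      < t * ∫ z in b..t,
          Real.sqrt ((z + a) / ((t ^ 2 - z ^ 2) * (z ^ 2 - 1) * (z - b))) := by
  have hb1 : 1 < b := lt_of_lt_of_le h1 hab
  have hg := g_int a b t h1 hab hbt
  have hf := f_int b t hb1 hbt
  have htg := hg.const_mul t
  have hpos : 0 < ∫ z in b..t,
      (t * Real.sqrt ((z + a) / ((t ^ 2 - z ^ 2) * (z ^ 2 - 1) * (z - b)))
        - (Real.sqrt (z ^ 2 - b ^ 2))⁻¹) := by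
    apply intervalIntegral_pos_of_pos_on (htg.sub hf) ?_ hbt
    intro x hx
    exact sub_pos.mpr (ptwise a b t x h1 hab hbt hx)
  rw [intervalIntegral.integral_sub htg hf, ftc b t hb1 hbt,
    intervalIntegral.integral_const_mul] at hpos
  linarith

end aux

/-- Period integral `I₁`. -/
noncomputable def I1 (a b t : ℝ) : ℝ :=
  ∫ z in (-t)..(-a), Real.sqrt ((b - z) / ((t ^ 2 - z ^ 2) * (z ^ 2 - 1) * (-z - a)))

/-- Period integral `J₁`. -/
noncomputable def J1 (a b t : ℝ) : ℝ :=
  ∫ z in (-t)..(-a), Real.sqrt ((-z - a) / ((t ^ 2 - z ^ 2) * (z ^ 2 - 1) * (b - z)))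

/-- Period integral `I₂`. -/
noncomputable def I2 (a b t : ℝ) : ℝ :=
  ∫ z in (-a)..(-1), Real.sqrt ((b - z) / ((t ^ 2 - z ^ 2) * (z ^ 2 - 1) * (z + a)))

/-- Period integral `J₂`. -/
noncomputable def J2 (a b t : ℝ) : ℝ :=
  ∫ z in (-a)..(-1), Real.sqrt ((z + a) / ((t ^ 2 - z ^ 2) * (z ^ 2 - 1) * (b - z)))

/-- Period integral `I₄`. -/
noncomputable def I4 (a b t : ℝ) : ℝ :=
  ∫ z in (1:ℝ)..b, Real.sqrt ((b - z) / ((t ^ 2 - z ^ 2) * (z ^ 2 - 1) * (z + a)))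

/-- Period integral `J₄`. -/
noncomputable def J4 (a b t : ℝ) : ℝ :=
  ∫ z in (1:ℝ)..b, Real.sqrt ((z + a) / ((t ^ 2 - z ^ 2) * (z ^ 2 - 1) * (b - z)))

/-- Period integral `I₅`. -/
noncomputable def I5 (a b t : ℝ) : ℝ :=
  ∫ z in b..t, Real.sqrt ((z - b) / ((t ^ 2 - z ^ 2) * (z ^ 2 - 1) * (z + a)))

/-- Period integral `J₅`. -/
noncomputable def J5 (a b t : ℝ) : ℝ :=
  ∫ z in b..t, Real.sqrt ((z + a) / ((t ^ 2 - z ^ 2) * (z ^ 2 - 1) * (z - b)))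

/-- The period quotient `Q(a,b;t)`. -/
noncomputable def Q (a b t : ℝ) : ℝ :=
  (I1 a b t + I5 a b t) / (I2 a b t + I4 a b t)
    - (J1 a b t + J5 a b t) / (J2 a b t + J4 a b t)

/-- For all `1 < a ≤ b < t` one has `t·J₅(a,b;t) > log((t + √(t²−b²))/b)`; in particular
`t·J₅(a,b;t) → +∞` as `t → +∞` (for fixed `1 < a ≤ b`). -/
theorem stmt6 :
    (∀ a b t : ℝ, 1 < a → a ≤ b → b < t →
      t * J5 a b t > Real.log ((t + Real.sqrt (t ^ 2 - b ^ 2)) / b)) ∧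
    (∀ a b : ℝ, 1 < a → a ≤ b →
      Tendsto (fun t : ℝ => t * J5 a b t) atTop atTop) := by
  have hmain : ∀ a b t : ℝ, 1 < a → a ≤ b → b < t →
      Real.log ((t + Real.sqrt (t ^ 2 - b ^ 2)) / b) < t * J5 a b t := by
    intro a b t h1 hab hbt
    simpa only [J5] using main_ineq a b t h1 hab hbt
  constructor
  · intro a b t h1 hab hbt
    exact hmain a b t h1 hab hbt
  · intro a b h1 hab
    have hb1 : 1 < b := lt_of_lt_of_le h1 hab
    have hb0 : 0 < b := by linarith
    refine tendsto_atTop_mono' atTop ?_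
      (Real.tendsto_log_atTop.comp (tendsto_id.atTop_div_const hb0))
    filter_upwards [eventually_gt_atTop b] with t hbt
    have h2 := hmain a b t h1 hab hbt
    have h3 : Real.log (id t / b) ≤ Real.log ((t + Real.sqrt (t ^ 2 - b ^ 2)) / b) := by
      have ht0 : 0 < t := by linarith
      exact Real.log_le_log (by simp only [id_eq]; positivity)
        (by simp only [id_eq]; gcongr; exact le_add_of_nonneg_right (Real.sqrt_nonneg _))
    exact le_trans h3 h2.le
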